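/- Let θ_0 = 1, θ_i = (1 + √(1 + 4θ_{i-1}²))/2 for 1 ≤ i ≤ N−1, and θ_N = (1 + √(1 + 8θ_{N-1}²))/2. Then θ_N / N converges to √2/2 as N → ∞ (equivalently, θ_N = (√2/2)N + o(N)). -/

import Mathlib

open Filter Real

private lemma sqrt_nat_tendsto_atTop :
    Tendsto (fun n : ℕ => Real.sqrt n) atTop atTop := by
  apply Filter.tendsto_atTop_atTop.mpr
  intro b
  refine ⟨⌈b ^ 2⌉₊, fun a ha => ?_⟩
  calc b ≤ |b| := le_abs_self b
    _ = Real.sqrt (b ^ 2) := (Real.sqrt_sq_eq_abs b).symm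
    _ ≤ Real.sqrt a := by
        apply Real.sqrt_le_sqrt
        calc b ^ 2 ≤ (⌈b ^ 2⌉₊ : ℝ) := Nat.le_ceil _
          _ ≤ (a : ℝ) := by exact_mod_cast ha

set_option maxHeartbeats 1000000 in
theorem theta_asymptotics (θ : ℕ → ℝ) (T : ℕ → ℝ) (h0 : θ 0 = 1)
    (hrec : ∀ i : ℕ, 1 ≤ i → θ i = (1 + Real.sqrt (1 + 4 * θ (i - 1) ^ 2)) / 2)
    (hT : ∀ N : ℕ, 1 ≤ N → T N = (1 + Real.sqrt (1 + 8 * θ (N - 1) ^ 2)) / 2) :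
    Filter.Tendsto (fun N : ℕ => T N / (N : ℝ)) Filter.atTop (nhds (Real.sqrt 2 / 2)) := by
  -- Lower bound
  have hlow : ∀ n : ℕ, 1 + (n : ℝ) / 2 ≤ θ n := by
    intro n
    induction n with
    | zero => simp [h0]
    | succ n ih =>
      have h1 := hrec (n + 1) (by omega)
      simp only [Nat.add_sub_cancel] at h1
      have hθ0 : (0 : ℝ) ≤ θ n := by nlinarith [Nat.cast_nonneg (α := ℝ) n]
      have h2 : 2 * θ n ≤ Real.sqrt (1 + 4 * θ n ^ 2) := by
        have : Real.sqrt ((2 * θ n) ^ 2) ≤ Real.sqrt (1 + 4 * θ n ^ 2) :=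
          Real.sqrt_le_sqrt (by nlinarith)
        rwa [Real.sqrt_sq (by positivity)] at this
      rw [h1]
      push_cast
      nlinarith
  have hθpos : ∀ n : ℕ, (0 : ℝ) < θ n := fun n => by
    have := hlow n; nlinarith [Nat.cast_nonneg (α := ℝ) n]
  -- Upper bound
  have hup : ∀ n : ℕ, θ n ≤ 1 + (n : ℝ) / 2 + Real.sqrt n / 4 := by
    intro n
    induction n with
    | zero => simp [h0]
    | succ n ih =>
      have h1 := hrec (n + 1) (by omega)
      simp only [Nat.add_sub_cancel] at h1
      set x := θ n with hx
      have hx0 : (0 : ℝ) < x := hθpos n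
      -- sqrt(1+4x²) ≤ 2x + 1/(4x)
      have h2 : Real.sqrt (1 + 4 * x ^ 2) ≤ 2 * x + 1 / (4 * x) := by
        have h3 : (1 + 4 * x ^ 2) ≤ (2 * x + 1 / (4 * x)) ^ 2 := by
          have h4 : x * (1 / (4 * x)) = 1 / 4 := by field_simp
          nlinarith [sq_nonneg (1 / (4 * x))]
        calc Real.sqrt (1 + 4 * x ^ 2) ≤ Real.sqrt ((2 * x + 1 / (4 * x)) ^ 2) :=
              Real.sqrt_le_sqrt h3
          _ = 2 * x + 1 / (4 * x) := Real.sqrt_sq (by positivity)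
      -- √(n+1) ≤ x
      have ht : Real.sqrt ((n : ℝ) + 1) ≤ x := by
        have h5 : Real.sqrt ((n : ℝ) + 1) ≤ Real.sqrt ((1 + (n : ℝ) / 2) ^ 2) :=
          Real.sqrt_le_sqrt (by nlinarith [Nat.cast_nonneg (α := ℝ) n])
        rw [Real.sqrt_sq (by positivity)] at h5
        exact h5.trans (hlow n)
      set s := Real.sqrt (n : ℝ) with hs
      set t := Real.sqrt ((n : ℝ) + 1) with hts
      have hs0 : 0 ≤ s := Real.sqrt_nonneg _
      have ht0 : 0 < t := Real.sqrt_pos.mpr (by positivity)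
      have hs2 : s ^ 2 = (n : ℝ) := Real.sq_sqrt (Nat.cast_nonneg n)
      have ht2 : t ^ 2 = (n : ℝ) + 1 := Real.sq_sqrt (by positivity)
      have h6 : 1 / (4 * x) ≤ 1 / (4 * t) := by
        apply one_div_le_one_div_of_le (by positivity)
        nlinarith
      push_cast
      have h7 : (2 : ℝ) * t ^ 2 - 2 * t * s ≥ 1 := by nlinarith [sq_nonneg (t - s)]
      have h8 : θ (n + 1) = (1 + Real.sqrt (1 + 4 * x ^ 2)) / 2 := h1
      have h9 : Real.sqrt (1 + 4 * x ^ 2) ≤ 2 * x + 1 / (4 * t) := by linarith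
      -- goal: (1 + √(1+4x²))/2 ≤ 1 + (n+1)/2 + t/4
      have hineq : (1 + (2 * x + 1 / (4 * t))) / 2 ≤ 1 + ((n : ℝ) + 1) / 2 + t / 4 := by
        rw [div_le_iff₀ (by norm_num : (0:ℝ) < 2)]
        have h10 : 1 / (4 * t) = 1 / (4 * t) := rfl
        have h11 : x ≤ 1 + (n : ℝ) / 2 + s / 4 := ih
        have h12 : 1 / (4 * t) ≤ (t - s) / 2 := by
          rw [div_le_div_iff₀ (by positivity) (by norm_num)]
          nlinarith
        nlinarith
      calc θ (n + 1) = (1 + Real.sqrt (1 + 4 * x ^ 2)) / 2 := h8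
        _ ≤ (1 + (2 * x + 1 / (4 * t))) / 2 := by linarith
        _ ≤ 1 + ((n : ℝ) + 1) / 2 + t / 4 := hineq
  -- θ(N-1)/N → 1/2
  have h1N : Tendsto (fun N : ℕ => 1 / (N : ℝ)) atTop (nhds 0) :=
    tendsto_one_div_atTop_nhds_zero_nat
  have hsqrtinv : Tendsto (fun N : ℕ => 1 / Real.sqrt N) atTop (nhds 0) :=
    (sqrt_nat_tendsto_atTop).inv_tendsto_atTop.congr (fun n => (one_div _).symm)
  have ha : Tendsto (fun N : ℕ => θ (N - 1) / N) atTop (nhds (1 / 2)) := by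
    have hlo : Tendsto (fun N : ℕ => 1 / 2 + (1 / (N : ℝ)) / 2) atTop (nhds (1 / 2)) := by
      have := (h1N.div_const 2).const_add (1 / 2 : ℝ)
      simpa using this
    have hhi : Tendsto (fun N : ℕ => 1 / 2 + (1 / (N : ℝ)) / 2 + (1 / Real.sqrt N) / 4)
        atTop (nhds (1 / 2)) := by
      have := ((h1N.div_const 2).const_add (1 / 2 : ℝ)).add (hsqrtinv.div_const 4)
      simpa using this
    apply tendsto_of_tendsto_of_tendsto_of_le_of_le' hlo hhi
    · filter_upwards [eventually_ge_atTop 1] with N hN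
      have hNpos : (0 : ℝ) < N := by exact_mod_cast hN
      have hcast : ((N - 1 : ℕ) : ℝ) = (N : ℝ) - 1 := by
        push_cast [Nat.cast_sub hN]; ring
      have := hlow (N - 1)
      rw [hcast] at this
      rw [le_div_iff₀ hNpos]
      have hE : (1 / 2 + (1 / (N : ℝ)) / 2) * N = (N : ℝ) / 2 + 1 / 2 := by
        field_simp
      rw [hE]; linarith
    · filter_upwards [eventually_ge_atTop 1] with N hN
      have hNpos : (0 : ℝ) < N := by exact_mod_cast hN
      have hcast : ((N - 1 : ℕ) : ℝ) = (N : ℝ) - 1 := by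
        push_cast [Nat.cast_sub hN]; ring
      have hub := hup (N - 1)
      rw [hcast] at hub
      have hmono : Real.sqrt ((N : ℝ) - 1) ≤ Real.sqrt N :=
        Real.sqrt_le_sqrt (by linarith)
      have hsq : Real.sqrt (N : ℝ) ^ 2 = (N : ℝ) := Real.sq_sqrt hNpos.le
      have hsqpos : (0 : ℝ) < Real.sqrt N := Real.sqrt_pos.mpr hNpos
      rw [div_le_iff₀ hNpos]
      have key : θ (N - 1) ≤ 1 + ((N : ℝ) - 1) / 2 + Real.sqrt N / 4 := by linarith
      have expand : (1 / 2 + (1 / (N : ℝ)) / 2 + (1 / Real.sqrt N) / 4) * N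
          = (N : ℝ) / 2 + 1 / 2 + Real.sqrt N / 4 := by
        field_simp
        nlinarith
      rw [expand]
      linarith
  -- Now the main limit
  have hmain : Tendsto
      (fun N : ℕ => (1 / (N : ℝ) + Real.sqrt ((1 / (N : ℝ)) ^ 2 + 8 * (θ (N - 1) / N) ^ 2)) / 2)
      atTop (nhds (Real.sqrt 2 / 2)) := by
    have hsq : Tendsto (fun N : ℕ => (1 / (N : ℝ)) ^ 2 + 8 * (θ (N - 1) / N) ^ 2)
        atTop (nhds ((0 : ℝ) ^ 2 + 8 * (1 / 2 : ℝ) ^ 2)) :=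
      ((h1N.pow 2)).add (((ha.pow 2)).const_mul 8)
    have hsqrt := hsq.sqrt
    have : ((0 : ℝ) ^ 2 + 8 * (1 / 2 : ℝ) ^ 2) = 2 := by norm_num
    rw [this] at hsqrt
    have hfin := (h1N.add hsqrt).div_const 2
    rw [show Real.sqrt 2 / 2 = ((0 : ℝ) + Real.sqrt 2) / 2 by ring]
    exact hfin
  apply hmain.congr'
  filter_upwards [eventually_ge_atTop 1] with N hN
  have hNpos : (0 : ℝ) < N := by exact_mod_cast hN
  rw [hT N hN]
  have hkey : Real.sqrt ((1 / (N : ℝ)) ^ 2 + 8 * (θ (N - 1) / N) ^ 2)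
      = Real.sqrt (1 + 8 * θ (N - 1) ^ 2) / N := by
    rw [eq_div_iff hNpos.ne']
    rw [← Real.sqrt_sq hNpos.le, ← Real.sqrt_mul (by positivity)]
    congr 1
    field_simp
    rw [Real.sq_sqrt (by positivity)]
  rw [hkey]
  field_simp
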